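/- arXiv:1212.0976 — 5 statements merged into one kernel-verified Lean document; each statement's English description precedes it below -/
import Mathlib

section
/- Let U be an n×m real matrix and let A be an n×n real symmetric matrix with A ≺ u·Id (i.e. u·Id − A is positive definite), and let u' > u. Assume ψ(A,u) − ψ(A,u') > 0. Let v ∈ ℝⁿ and s > 0, and define F(v) = (vᵗ(u'·Id − A)⁻²v / (ψ(A,u) − ψ(A,u')))·‖U‖² + vᵗ(u'·Id − A)⁻¹v. If F(v) ≤ 1/s, then A + s·vvᵗ ≺ u'·Id and ψ(A + s·vvᵗ, u') ≤ ψ(A, u). -/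
open Matrix
open scoped BigOperators

/-- The operator norm of a matrix viewed as a map `ℓ₂^m → ℓ₂^n`. -/
noncomputable def opNorm {n m : ℕ} (U : Matrix (Fin n) (Fin m) ℝ) : ℝ :=
  ‖LinearMap.toContinuousLinearMap (Matrix.toEuclideanLin U)‖

/-- `ψ(A, u) = Tr (Uᵗ (u·Id − A)⁻¹ U)`. -/
noncomputable def psi {n m : ℕ} (U : Matrix (Fin n) (Fin m) ℝ)
    (A : Matrix (Fin n) (Fin n) ℝ) (u : ℝ) : ℝ :=
  (Uᵀ * (u • 1 - A)⁻¹ * U).trace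

section helpers
set_option linter.unusedSectionVars false
variable {α β γ : Type*} [Fintype α] [Fintype β] [Fintype γ]

lemma vecMulVec_mul_mat (a : α → ℝ) (b : β → ℝ) (Y : Matrix β γ ℝ) :
    vecMulVec a b * Y = vecMulVec a (b ᵥ* Y) := by
  ext i j
  simp [Matrix.mul_apply, vecMulVec_apply, Matrix.vecMul, dotProduct,
    Finset.mul_sum, mul_assoc]

lemma mat_mul_vecMulVec (Y : Matrix α β ℝ) (a : β → ℝ) (b : γ → ℝ) :
    Y * vecMulVec a b = vecMulVec (Y *ᵥ a) b := by
  ext i j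
  simp only [Matrix.mul_apply, vecMulVec_apply, Matrix.mulVec, dotProduct,
    Finset.sum_mul]
  exact Finset.sum_congr rfl fun k _ => by ring

lemma vecMulVec_mulVec (a : α → ℝ) (b : β → ℝ) (x : β → ℝ) :
    vecMulVec a b *ᵥ x = (b ⬝ᵥ x) • a := by
  ext i
  simp only [Matrix.mulVec, vecMulVec_apply, dotProduct, Finset.sum_mul,
    Pi.smul_apply, smul_eq_mul]
  exact Finset.sum_congr rfl fun k _ => by ring

lemma trace_vecMulVec' (a b : α → ℝ) : (vecMulVec a b).trace = a ⬝ᵥ b := by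
  simp [Matrix.trace, Matrix.diag, vecMulVec_apply, dotProduct]

lemma vecMul_vecMulVec (b : α → ℝ) (c : α → ℝ) (d : β → ℝ) :
    b ᵥ* vecMulVec c d = (b ⬝ᵥ c) • d := by
  ext j
  simp only [Matrix.vecMul, vecMulVec_apply, dotProduct, Finset.sum_mul,
    Pi.smul_apply, smul_eq_mul]
  exact Finset.sum_congr rfl fun k _ => by ring

lemma vecMulVec_smul_right (r : ℝ) (a : α → ℝ) (b : β → ℝ) :
    vecMulVec a (r • b) = r • vecMulVec a b := by
  ext i j; simp [vecMulVec_apply, mul_comm, mul_left_comm]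

lemma transpose_of_isHermitian {S : Matrix α α ℝ} (h : S.IsHermitian) : Sᵀ = S := by
  ext i j
  have := congrFun (congrFun h.eq i) j
  simpa [Matrix.conjTranspose_apply] using this

lemma dot_symm_sq {S : Matrix α α ℝ} (h : S.IsHermitian) (a : α → ℝ) :
    (S *ᵥ a) ⬝ᵥ (S *ᵥ a) = a ⬝ᵥ ((S * S) *ᵥ a) := by
  rw [← Matrix.mulVec_mulVec, Matrix.dotProduct_mulVec a S (S *ᵥ a),
    ← Matrix.mulVec_transpose, transpose_of_isHermitian h]

lemma dotProduct_self_nonneg' (a : α → ℝ) : 0 ≤ a ⬝ᵥ a :=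
  Finset.sum_nonneg fun i _ => mul_self_nonneg _

end helpers

lemma opNorm_nonneg {n m : ℕ} (U : Matrix (Fin n) (Fin m) ℝ) : 0 ≤ opNorm U :=
  norm_nonneg _

lemma mulVec_dot_le {n m : ℕ} (U : Matrix (Fin n) (Fin m) ℝ) (x : Fin m → ℝ) :
    (U *ᵥ x) ⬝ᵥ (U *ᵥ x) ≤ opNorm U ^ 2 * (x ⬝ᵥ x) := by
  set f := LinearMap.toContinuousLinearMap (Matrix.toEuclideanLin U) with hf
  set x' : EuclideanSpace ℝ (Fin m) := (WithLp.equiv 2 (Fin m → ℝ)).symm x with hx'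
  have hfx : f x' = (WithLp.equiv 2 (Fin n → ℝ)).symm (U *ᵥ x) := rfl
  have h1 : ‖f x'‖ ≤ ‖f‖ * ‖x'‖ := f.le_opNorm x'
  have h2 : ‖f x'‖ ^ 2 = (U *ᵥ x) ⬝ᵥ (U *ᵥ x) := by
    rw [hfx, EuclideanSpace.norm_eq, Real.sq_sqrt (Finset.sum_nonneg fun i _ => sq_nonneg _)]
    simp [dotProduct, sq]
  have h3 : ‖x'‖ ^ 2 = x ⬝ᵥ x := by
    rw [EuclideanSpace.norm_eq, Real.sq_sqrt (Finset.sum_nonneg fun i _ => sq_nonneg _)]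
    simp [dotProduct, sq, hx']
  calc (U *ᵥ x) ⬝ᵥ (U *ᵥ x) = ‖f x'‖ ^ 2 := h2.symm
    _ ≤ (‖f‖ * ‖x'‖) ^ 2 := pow_le_pow_left₀ (norm_nonneg _) h1 2
    _ = opNorm U ^ 2 * (x ⬝ᵥ x) := by rw [mul_pow, h3]; rfl

lemma opNorm_transpose {n m : ℕ} (U : Matrix (Fin n) (Fin m) ℝ) : opNorm Uᵀ = opNorm U := by
  have hT : Uᵀ = Uᴴ := by
    ext i j; simp [Matrix.conjTranspose_apply]
  rw [opNorm, hT, Matrix.toEuclideanLin_conjTranspose_eq_adjoint,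
    LinearMap.adjoint_toContinuousLinearMap]
  exact ContinuousLinearMap.adjoint.norm_map _

open scoped MatrixOrder Matrix.Norms.L2Operator in
lemma posDef_cauchy {k : ℕ} {M : Matrix (Fin k) (Fin k) ℝ} (hM : M.PosDef)
    (a x : Fin k → ℝ) :
    (a ⬝ᵥ x) ^ 2 ≤ (a ⬝ᵥ (M⁻¹ *ᵥ a)) * (x ⬝ᵥ (M *ᵥ x)) := by
  set S := CFC.sqrt M with hS
  have hS2 : S * S = M := CFC.sqrt_mul_sqrt_self M hM.posSemidef.nonneg
  have hSH : S.IsHermitian := (CFC.sqrt_nonneg M).posSemidef.1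
  have hdet : IsUnit S.det := by
    have h1 : S.det * S.det = M.det := by rw [← Matrix.det_mul, hS2]
    have h2 : (0:ℝ) < M.det := hM.det_pos
    refine isUnit_iff_ne_zero.mpr fun h => ?_
    rw [h, zero_mul] at h1; linarith
  have hSi : S * S⁻¹ = 1 := Matrix.mul_nonsing_inv S hdet
  have hSi' : S⁻¹ * S = 1 := Matrix.nonsing_inv_mul S hdet
  have hSiH : S⁻¹.IsHermitian := hSH.inv
  set b := S⁻¹ *ᵥ a with hb
  set y := S *ᵥ x with hy
  have hax : a ⬝ᵥ x = b ⬝ᵥ y := by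
    have h1 : x = S⁻¹ *ᵥ y := by rw [hy, Matrix.mulVec_mulVec, hSi', Matrix.one_mulVec]
    rw [h1, Matrix.dotProduct_mulVec, ← Matrix.mulVec_transpose,
      transpose_of_isHermitian hSiH]
  have hcs : (b ⬝ᵥ y) ^ 2 ≤ (b ⬝ᵥ b) * (y ⬝ᵥ y) := by
    have := Finset.sum_mul_sq_le_sq_mul_sq Finset.univ b y
    simpa [dotProduct, sq] using this
  have hbb : b ⬝ᵥ b = a ⬝ᵥ (M⁻¹ *ᵥ a) := by
    rw [hb, dot_symm_sq hSiH a, ← Matrix.mul_inv_rev, hS2]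
  have hyy : y ⬝ᵥ y = x ⬝ᵥ (M *ᵥ x) := by
    rw [hy, dot_symm_sq hSH x, hS2]
  rw [hax, ← hbb, ← hyy]
  exact hcs

/-- **Lemma 2.2 (upper-bound step).** If `A` is symmetric with `A ≺ u·Id`, `u' > u`,
`ψ(A,u) − ψ(A,u') > 0`, `s > 0` and `F(v) ≤ 1/s` where
`F(v) = (vᵗ(u'Id−A)⁻²v/(ψ(A,u)−ψ(A,u')))·‖U‖² + vᵗ(u'Id−A)⁻¹v`,
then `A + s·vvᵗ ≺ u'·Id` and `ψ(A+s·vvᵗ, u') ≤ ψ(A, u)`. -/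
theorem upper_bound_step {n m : ℕ} (U : Matrix (Fin n) (Fin m) ℝ)
    (A : Matrix (Fin n) (Fin n) ℝ) (hA : A.IsHermitian)
    (u u' : ℝ) (hpd : (u • 1 - A).PosDef) (hu' : u < u')
    (hΨ : 0 < psi U A u - psi U A u')
    (v : Fin n → ℝ) (s : ℝ) (hs : 0 < s)
    (hF : v ⬝ᵥ (((u' • 1 - A)⁻¹ * (u' • 1 - A)⁻¹) *ᵥ v) / (psi U A u - psi U A u')
          * opNorm U ^ 2
        + v ⬝ᵥ ((u' • 1 - A)⁻¹ *ᵥ v) ≤ 1 / s) :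
    (u' • 1 - (A + s • vecMulVec v v)).PosDef ∧
      psi U (A + s • vecMulVec v v) u' ≤ psi U A u := by
  classical
  set M : Matrix (Fin n) (Fin n) ℝ := u' • 1 - A with hMdef
  set V : Matrix (Fin n) (Fin n) ℝ := vecMulVec v v with hVdef
  set Δ : ℝ := psi U A u - psi U A u' with hΔdef
  set o : ℝ := opNorm U ^ 2 with hodef
  set p : ℝ := v ⬝ᵥ ((M⁻¹ * M⁻¹) *ᵥ v) with hpdef
  set q : ℝ := v ⬝ᵥ (M⁻¹ *ᵥ v) with hqdef
  -- M is Hermitian and positive definite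
  have hMH : M.IsHermitian := by
    show Mᴴ = M
    rw [hMdef, Matrix.conjTranspose_sub, Matrix.conjTranspose_smul, hA.eq]
    simp
  have hMpd : M.PosDef := by
    refine Matrix.PosDef.of_dotProduct_mulVec_pos hMH fun x hx => ?_
    rw [star_trivial]
    have h0 := hpd.dotProduct_mulVec_pos hx
    rw [star_trivial] at h0
    have he : x ⬝ᵥ (M *ᵥ x) = x ⬝ᵥ ((u • 1 - A) *ᵥ x) + (u' - u) * (x ⬝ᵥ x) := by
      rw [hMdef]
      simp only [Matrix.sub_mulVec, Matrix.smul_mulVec, Matrix.one_mulVec,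
        dotProduct_sub, dotProduct_smul, smul_eq_mul]
      ring
    have h4 : 0 ≤ (u' - u) * (x ⬝ᵥ x) :=
      mul_nonneg (by linarith) (dotProduct_self_nonneg' x)
    rw [he]; linarith
  have hMdetu : IsUnit M.det := isUnit_iff_ne_zero.mpr hMpd.det_pos.ne'
  have hMinv : M * M⁻¹ = 1 := Matrix.mul_nonsing_inv M hMdetu
  have hMiH : M⁻¹.IsHermitian := hMH.inv
  have hMiT : (M⁻¹)ᵀ = M⁻¹ := transpose_of_isHermitian hMiH
  set w : Fin n → ℝ := M⁻¹ *ᵥ v with hw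
  have hpw : p = w ⬝ᵥ w := by
    rw [hpdef, hw, dot_symm_sq hMiH v]
  have hp0 : 0 ≤ p := hpw ▸ dotProduct_self_nonneg' w
  have ho0 : 0 ≤ o := hodef ▸ sq_nonneg _
  -- opNorm U ≠ 0
  have hU0 : opNorm U ≠ 0 := by
    intro h
    have hf0 : LinearMap.toContinuousLinearMap (Matrix.toEuclideanLin U) = 0 := by
      rw [opNorm] at h; exact norm_eq_zero.mp h
    have h2 : Matrix.toEuclideanLin U = 0 :=
      (LinearEquiv.map_eq_zero_iff _).mp hf0
    have hU : U = 0 := (LinearEquiv.map_eq_zero_iff _).mp h2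
    have : psi U A u = 0 := by simp [psi, hU]
    have : psi U A u' = 0 := by simp [psi, hU]
    rw [hΔdef] at hΨ
    simp_all
  -- s * q < 1
  have hsq1 : s * q < 1 := by
    rcases eq_or_ne v 0 with hv | hv
    · have : q = 0 := by simp [hqdef, hv]
      rw [this]; simpa using zero_lt_one
    · have hw0 : w ≠ 0 := by
        intro h
        apply hv
        have hMw : M *ᵥ w = v := by
          rw [hw, Matrix.mulVec_mulVec, hMinv, Matrix.one_mulVec]
        rw [← hMw, h, Matrix.mulVec_zero]
      have hwp : 0 < w ⬝ᵥ w := by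
        rcases (dotProduct_self_nonneg' w).lt_or_eq with h | h
        · exact h
        · exact absurd (dotProduct_self_eq_zero.mp h.symm) hw0
      have hppos : 0 < p := hpw ▸ hwp
      have hopos : 0 < o := by
        rw [hodef]
        exact pow_pos ((opNorm_nonneg U).lt_of_ne (Ne.symm hU0)) 2
      have ht1 : 0 < p / Δ * o := by positivity
      have hqlt : q < 1 / s := by linarith
      have := (lt_div_iff₀ hs).mp hqlt
      linarith [this, mul_comm q s]
  have hd : 0 < 1 - s * q := by linarith
  -- N = M - s•V is Hermitian and positive definite
  have hVH : V.IsHermitian := by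
    show Vᴴ = V
    ext i j
    simp [hVdef, Matrix.conjTranspose_apply, vecMulVec_apply, mul_comm]
  have hNdef : u' • (1 : Matrix (Fin n) (Fin n) ℝ) - (A + s • V) = M - s • V := by
    rw [sub_add_eq_sub_sub]
  have hNH : (M - s • V).IsHermitian := by
    refine hMH.sub ?_
    show (s • V)ᴴ = s • V
    rw [Matrix.conjTranspose_smul, hVH.eq]
    simp
  have hNpd : (M - s • V).PosDef := by
    refine Matrix.PosDef.of_dotProduct_mulVec_pos hNH fun x hx => ?_
    rw [star_trivial]
    have hMx : 0 < x ⬝ᵥ (M *ᵥ x) := by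
      have := hMpd.dotProduct_mulVec_pos hx; rwa [star_trivial] at this
    have hca : (v ⬝ᵥ x) ^ 2 ≤ q * (x ⬝ᵥ (M *ᵥ x)) := posDef_cauchy hMpd v x
    have he : x ⬝ᵥ ((M - s • V) *ᵥ x) = x ⬝ᵥ (M *ᵥ x) - s * (v ⬝ᵥ x) ^ 2 := by
      rw [Matrix.sub_mulVec, dotProduct_sub, Matrix.smul_mulVec,
        hVdef, _root_.vecMulVec_mulVec]
      rw [dotProduct_smul, dotProduct_smul]
      simp only [smul_eq_mul]
      rw [dotProduct_comm x v]
      ring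
    rw [he]
    nlinarith [mul_le_mul_of_nonneg_left hca hs.le,
      mul_pos hMx hd]
  constructor
  · rw [hNdef]; exact hNpd
  -- now the trace bound
  have hNdetu : IsUnit (M - s • V).det := isUnit_iff_ne_zero.mpr hNpd.det_pos.ne'
  set c : ℝ := s / (1 - s * q) with hc
  have hc0 : 0 ≤ c := div_nonneg hs.le hd.le
  have hwv : v ᵥ* M⁻¹ = w := by rw [← Matrix.mulVec_transpose, hMiT]
  have hqq : (v ᵥ* M⁻¹) ⬝ᵥ v = q := by
    rw [hwv, hw, dotProduct_comm]
  have hVMV : V * M⁻¹ * V = q • V := by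
    rw [hVdef, vecMulVec_mul_mat, vecMulVec_mul_mat, _root_.vecMul_vecMulVec,
      hqq, vecMulVec_smul_right]
  set P : Matrix (Fin n) (Fin n) ℝ := M⁻¹ + c • (M⁻¹ * V * M⁻¹) with hP
  have h1c : c * (1 - s * q) = s := by
    rw [hc]; field_simp
  have hNP : (M - s • V) * P = 1 := by
    have e1 : M * (M⁻¹ * V * M⁻¹) = V * M⁻¹ := by
      rw [← Matrix.mul_assoc, ← Matrix.mul_assoc, hMinv, Matrix.one_mul]
    have e2 : V * (M⁻¹ * V * M⁻¹) = q • (V * M⁻¹) := by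
      calc V * (M⁻¹ * V * M⁻¹) = V * M⁻¹ * V * M⁻¹ := by
            rw [Matrix.mul_assoc, Matrix.mul_assoc, Matrix.mul_assoc]
        _ = (q • V) * M⁻¹ := by rw [hVMV]
        _ = q • (V * M⁻¹) := by rw [Matrix.smul_mul]
    rw [hP, Matrix.sub_mul, Matrix.mul_add, Matrix.mul_add, hMinv,
      mul_smul_comm, e1, smul_mul_assoc, mul_smul_comm, smul_mul_assoc, e2]
    rw [smul_smul, smul_smul]
    have hco : c = s + c * s * q := by linear_combination h1c
    calc 1 + c • (V * M⁻¹) - (s • (V * M⁻¹) + (c * s * q) • (V * M⁻¹))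
        = 1 + c • (V * M⁻¹) - (s + c * s * q) • (V * M⁻¹) := by rw [add_smul]
      _ = 1 + c • (V * M⁻¹) - c • (V * M⁻¹) := by rw [← hco]
      _ = 1 := by abel
  have hNinv : (M - s • V)⁻¹ = P := Matrix.inv_eq_right_inv hNP
  -- trace computation
  have hMVM : M⁻¹ * V * M⁻¹ = vecMulVec w w := by
    rw [hVdef, mat_mul_vecMulVec, vecMulVec_mul_mat, hwv]
  set y : Fin m → ℝ := Uᵀ *ᵥ w with hy
  have hwU : w ᵥ* U = y := by rw [hy, Matrix.mulVec_transpose]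
  have htr : (Uᵀ * (M⁻¹ * V * M⁻¹) * U).trace = y ⬝ᵥ y := by
    rw [hMVM, mat_mul_vecMulVec, vecMulVec_mul_mat, hwU, trace_vecMulVec']
  have hpsiA' : psi U A u' = (Uᵀ * M⁻¹ * U).trace := by rw [psi]
  have hpsiN : psi U (A + s • V) u' = psi U A u' + c * (y ⬝ᵥ y) := by
    have h2 : psi U (A + s • V) u' = (Uᵀ * (M - s • V)⁻¹ * U).trace := by
      rw [psi, hNdef]
    rw [h2, hNinv, hP, Matrix.mul_add, Matrix.add_mul, Matrix.mul_smul,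
      Matrix.smul_mul, Matrix.trace_add, Matrix.trace_smul, htr, hpsiA',
      smul_eq_mul]
  -- bound the extra term
  have hyy : y ⬝ᵥ y ≤ o * p := by
    have h1 := mulVec_dot_le Uᵀ w
    rw [opNorm_transpose] at h1
    rw [hy, hpw]
    exact h1
  have hkey : c * (o * p) ≤ Δ := by
    have h1 : p / Δ * o ≤ 1 / s - q := by linarith
    have h2 : p * o / Δ ≤ 1 / s - q := by rw [← div_mul_eq_mul_div]; exact h1
    have h3 : p * o ≤ (1 / s - q) * Δ := (div_le_iff₀ hΨ).mp h2
    have h4 : s * (p * o) ≤ s * ((1 / s - q) * Δ) :=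
      mul_le_mul_of_nonneg_left h3 hs.le
    have h5 : s * ((1 / s - q) * Δ) = (1 - s * q) * Δ := by
      have hsne : s ≠ 0 := hs.ne'
      field_simp
    have h6 : s * (p * o) ≤ (1 - s * q) * Δ := h4.trans_eq h5
    rw [hc, div_mul_eq_mul_div, div_le_iff₀ hd]
    linarith [h6]
  have hfin : c * (y ⬝ᵥ y) ≤ Δ :=
    le_trans (mul_le_mul_of_nonneg_left hyy hc0) hkey
  rw [hpsiN]
  have : Δ = psi U A u - psi U A u' := hΔdef
  linarith
end

section
/- Let U be an n×m real matrix. (i) Let A be an n×n real symmetric positive semidefinite matrix whose nonzero eigenvalues are all strictly greater than b' > 0, and let Λ > 0. Then for every unit vector v ∈ ℝⁿ: −(vᵗ(A − b'·Id)⁻²v/Λ)·‖U‖² − vᵗ(A − b'·Id)⁻¹v ≤ 1/b'. (ii) Let A be an n×n real symmetric positive semidefinite matrix with A ≺ u'·Id for some u' > 0, and let Ψ > 0. Then for every unit vector v ∈ ℝⁿ: (vᵗ(u'·Id − A)⁻²v/Ψ)·‖U‖² + vᵗ(u'·Id − A)⁻¹v ≥ 1/u'. -/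
open Matrix
open scoped BigOperators

namespace QFBhelp
variable {n : ℕ} {A : Matrix (Fin n) (Fin n) ℝ} (hA : A.IsHermitian)

noncomputable def Q : Matrix (Fin n) (Fin n) ℝ :=
  (Matrix.IsHermitian.eigenvectorUnitary hA : Matrix (Fin n) (Fin n) ℝ)

lemma Q_mul_star : Q hA * star (Q hA) = 1 :=
  (Matrix.mem_unitaryGroup_iff).mp (Matrix.IsHermitian.eigenvectorUnitary hA).2

lemma star_mul_Q : star (Q hA) * Q hA = 1 :=
  (Matrix.mem_unitaryGroup_iff').mp (Matrix.IsHermitian.eigenvectorUnitary hA).2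

noncomputable def conj (d : Fin n → ℝ) : Matrix (Fin n) (Fin n) ℝ :=
  Q hA * Matrix.diagonal d * star (Q hA)

lemma conj_spectral : A = conj hA hA.eigenvalues := by
  have := hA.spectral_theorem
  simpa [conj, Q, RCLike.ofReal_real_eq_id, Function.comp] using this

lemma conj_smul_one (c : ℝ) :
    c • (1 : Matrix (Fin n) (Fin n) ℝ) = conj hA (fun _ => c) := by
  rw [conj, ← Matrix.smul_one_eq_diagonal]
  simp [Matrix.mul_smul, Matrix.smul_mul, Q_mul_star]

lemma conj_sub (d e : Fin n → ℝ) : conj hA d - conj hA e = conj hA (d - e) := by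
  simp only [conj, ← Matrix.sub_mul, ← Matrix.mul_sub, Matrix.diagonal_sub]
  rfl

lemma conj_add (d e : Fin n → ℝ) : conj hA d + conj hA e = conj hA (d + e) := by
  simp only [conj, ← Matrix.add_mul, ← Matrix.mul_add, Matrix.diagonal_add]
  rfl

lemma conj_mul (d e : Fin n → ℝ) : conj hA d * conj hA e = conj hA (d * e) := by
  simp only [conj]
  simp only [mul_assoc]
  rw [← mul_assoc (star (Q hA)) (Q hA), star_mul_Q, one_mul,
    ← mul_assoc (Matrix.diagonal d), Matrix.diagonal_mul_diagonal]
  rfl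

lemma conj_inv (d : Fin n → ℝ) (hd : ∀ i, d i ≠ 0) : (conj hA d)⁻¹ = conj hA d⁻¹ := by
  apply Matrix.inv_eq_right_inv
  rw [conj_mul]
  have : d * d⁻¹ = fun _ => (1:ℝ) := by
    funext i; exact mul_inv_cancel₀ (hd i)
  rw [this, conj, Matrix.diagonal_one, mul_one, Q_mul_star]

lemma conj_posSemidef (d : Fin n → ℝ) (hd : ∀ i, 0 ≤ d i) : (conj hA d).PosSemidef := by
  have h1 : (Matrix.diagonal d).PosSemidef := Matrix.posSemidef_diagonal_iff.mpr hd
  have := h1.mul_mul_conjTranspose_same (Q hA)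
  simpa [conj, Matrix.star_eq_conjTranspose, Matrix.conjTranspose] using this

end QFBhelp

open QFBhelp

/-- **Lemma 2.6 (bounds on the quadratic forms at unit vectors).**
(i) If `A` is symmetric PSD with nonzero eigenvalues `> b' > 0` and `Λ > 0`, then for
every unit vector `v`: `−(vᵗ(A−b'Id)⁻²v/Λ)‖U‖² − vᵗ(A−b'Id)⁻¹v ≤ 1/b'`.
(ii) If `A` is symmetric PSD with `A ≺ u'·Id`, `u' > 0` and `Ψ > 0`, then for every unit
vector `v`: `(vᵗ(u'Id−A)⁻²v/Ψ)‖U‖² + vᵗ(u'Id−A)⁻¹v ≥ 1/u'`. -/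
theorem quadratic_form_bounds {n m : ℕ} (U : Matrix (Fin n) (Fin m) ℝ) :
    (∀ (A : Matrix (Fin n) (Fin n) ℝ) (hA : A.PosSemidef) (b' : ℝ), 0 < b' →
      (∀ i, hA.isHermitian.eigenvalues i ≠ 0 → b' < hA.isHermitian.eigenvalues i) →
      ∀ Λ : ℝ, 0 < Λ → ∀ v : Fin n → ℝ, ∑ i, v i ^ 2 = 1 →
        -(v ⬝ᵥ (((A - b' • 1)⁻¹ * (A - b' • 1)⁻¹) *ᵥ v) / Λ * opNorm U ^ 2)
            - v ⬝ᵥ ((A - b' • 1)⁻¹ *ᵥ v) ≤ 1 / b') ∧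
    (∀ A : Matrix (Fin n) (Fin n) ℝ, A.PosSemidef → ∀ u' : ℝ, 0 < u' →
      (u' • 1 - A).PosDef →
      ∀ Ψ : ℝ, 0 < Ψ → ∀ v : Fin n → ℝ, ∑ i, v i ^ 2 = 1 →
        1 / u' ≤ v ⬝ᵥ (((u' • 1 - A)⁻¹ * (u' • 1 - A)⁻¹) *ᵥ v) / Ψ * opNorm U ^ 2
            + v ⬝ᵥ ((u' • 1 - A)⁻¹ *ᵥ v)) := by
  constructor
  · intro A hA b' hb' hev Λ hΛ v hv
    set hH := hA.isHermitian with hHdef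
    set ev := hH.eigenvalues with evdef
    have hne : ∀ i, ev i - b' ≠ 0 := by
      intro i
      rcases eq_or_ne (ev i) 0 with h | h
      · rw [h]; simpa using hb'.ne'
      · exact sub_ne_zero.mpr (hev i h).ne'
    have hAeq : A - b' • 1 = conj hH (fun i => ev i - b') := by
      conv_lhs => rw [conj_spectral hH, conj_smul_one hH b', conj_sub]
      rfl
    have hBinv : (A - b' • 1)⁻¹ = conj hH (fun i => (ev i - b')⁻¹) := by
      rw [hAeq, conj_inv hH _ hne]; rfl
    have P1 : ((A - b' • 1)⁻¹ + b'⁻¹ • 1).PosSemidef := by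
      rw [hBinv, conj_smul_one hH b'⁻¹, conj_add]
      apply conj_posSemidef
      intro i
      rcases eq_or_ne (ev i) 0 with h | h
      · simp only [Pi.add_apply, h, zero_sub, inv_neg]
        linarith
      · have h1 := hev i h
        have : 0 < (ev i - b')⁻¹ := inv_pos.mpr (by linarith)
        have : 0 < b'⁻¹ := inv_pos.mpr hb'
        simp only [Pi.add_apply]; linarith
    have P2 : ((A - b' • 1)⁻¹ * (A - b' • 1)⁻¹).PosSemidef := by
      rw [hBinv, QFBhelp.conj_mul]
      exact conj_posSemidef hH _ fun i => mul_self_nonneg _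
    have h2 : 0 ≤ v ⬝ᵥ (((A - b' • 1)⁻¹ * (A - b' • 1)⁻¹) *ᵥ v) := by
      simpa using P2.dotProduct_mulVec_nonneg v
    have hvv : v ⬝ᵥ v = 1 := by
      rw [dotProduct]; rw [← hv]; exact Finset.sum_congr rfl fun i _ => (sq (v i)).symm
    have h1 : 0 ≤ v ⬝ᵥ ((A - b' • 1)⁻¹ *ᵥ v) + b'⁻¹ := by
      have := P1.dotProduct_mulVec_nonneg v
      simp only [star_trivial, Matrix.add_mulVec, Matrix.smul_mulVec,
        Matrix.one_mulVec, dotProduct_add, dotProduct_smul, smul_eq_mul, hvv, mul_one] at this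
      exact this
    have hnn : 0 ≤ v ⬝ᵥ (((A - b' • 1)⁻¹ * (A - b' • 1)⁻¹) *ᵥ v) / Λ * opNorm U ^ 2 :=
      mul_nonneg (div_nonneg h2 hΛ.le) (sq_nonneg _)
    rw [one_div]
    linarith
  · intro A hA u' hu' hS Ψ hΨ v hv
    set hH := hA.isHermitian with hHdef
    set ev := hH.eigenvalues with evdef
    have hlt : ∀ i, 0 < u' - ev i := by
      intro i
      set w : Fin n → ℝ := ⇑(hH.eigenvectorBasis i) with wdef
      have hw : w ≠ 0 := by
        intro h
        apply hH.eigenvectorBasis.orthonormal.ne_zero i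
        ext x
        exact congrFun h x
      have hpos := hS.dotProduct_mulVec_pos hw
      have hmv : (u' • 1 - A) *ᵥ w = (u' - ev i) • w := by
        rw [Matrix.sub_mulVec, Matrix.smul_mulVec, Matrix.one_mulVec, wdef,
          hH.mulVec_eigenvectorBasis, sub_smul]
      rw [star_trivial, hmv, dotProduct_smul, smul_eq_mul] at hpos
      have hww : 0 < w ⬝ᵥ w := by
        rcases (dotProduct_star_self_nonneg w).lt_or_eq with h | h
        · simpa using h
        · exact absurd (dotProduct_self_eq_zero.mp (by simpa using h.symm)) hw
      nlinarith
    have hne : ∀ i, u' - ev i ≠ 0 := fun i => (hlt i).ne'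
    have hSeq : u' • 1 - A = conj hH (fun i => u' - ev i) := by
      conv_lhs => rw [conj_spectral hH, conj_smul_one hH u', conj_sub]
      rfl
    have hSinv : (u' • 1 - A)⁻¹ = conj hH (fun i => (u' - ev i)⁻¹) := by
      rw [hSeq, conj_inv hH _ hne]; rfl
    have P1 : ((u' • 1 - A)⁻¹ - u'⁻¹ • 1).PosSemidef := by
      rw [hSinv, conj_smul_one hH u'⁻¹, conj_sub]
      apply conj_posSemidef
      intro i
      simp only [Pi.sub_apply]
      have h1 : u' - ev i ≤ u' := by
        have := hA.eigenvalues_nonneg i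
        linarith
      have h2 : u'⁻¹ ≤ (u' - ev i)⁻¹ := inv_anti₀ (hlt i) h1
      linarith
    have P2 : ((u' • 1 - A)⁻¹ * (u' • 1 - A)⁻¹).PosSemidef := by
      rw [hSinv, QFBhelp.conj_mul]
      exact conj_posSemidef hH _ fun i => mul_self_nonneg _
    have h2 : 0 ≤ v ⬝ᵥ (((u' • 1 - A)⁻¹ * (u' • 1 - A)⁻¹) *ᵥ v) := by
      simpa using P2.dotProduct_mulVec_nonneg v
    have hvv : v ⬝ᵥ v = 1 := by
      rw [dotProduct]; rw [← hv]; exact Finset.sum_congr rfl fun i _ => (sq (v i)).symm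
    have h1 : 0 ≤ v ⬝ᵥ ((u' • 1 - A)⁻¹ *ᵥ v) - u'⁻¹ := by
      have := P1.dotProduct_mulVec_nonneg v
      simp only [star_trivial, Matrix.sub_mulVec, Matrix.smul_mulVec,
        Matrix.one_mulVec, dotProduct_sub, dotProduct_smul, smul_eq_mul, hvv, mul_one] at this
      exact this
    have hnn : 0 ≤ v ⬝ᵥ (((u' • 1 - A)⁻¹ * (u' • 1 - A)⁻¹) *ᵥ v) / Ψ * opNorm U ^ 2 :=
      mul_nonneg (div_nonneg h2 hΨ.le) (sq_nonneg _)
    rw [one_div]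
    linarith
end

section
/- Let U be an n×m real matrix, A an n×n real symmetric matrix with A ≺ u·Id, and Δ > 0. Then ψ(A, u) − ψ(A, u+Δ) ≥ Δ·Tr(Uᵗ((u+Δ)·Id − A)⁻² U). -/
open Matrix
open scoped BigOperators

lemma trace_nonneg_of_posSemidef {k : ℕ} {M : Matrix (Fin k) (Fin k) ℝ}
    (hM : M.PosSemidef) : 0 ≤ M.trace := by
  apply Finset.sum_nonneg
  intro i _
  exact hM.diag_nonneg

/-- **Lemma (potential difference bound).** If `A` is symmetric with `A ≺ u·Id` and
`Δ > 0`, then `ψ(A,u) − ψ(A,u+Δ) ≥ Δ·Tr(Uᵗ((u+Δ)Id − A)⁻²U)`. -/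
theorem psi_difference_lower_bound {n m : ℕ} (U : Matrix (Fin n) (Fin m) ℝ)
    (A : Matrix (Fin n) (Fin n) ℝ) (hA : A.IsHermitian)
    (u Δ : ℝ) (hpd : (u • 1 - A).PosDef) (hΔ : 0 < Δ) :
    Δ * (Uᵀ * (((u + Δ) • 1 - A)⁻¹ * ((u + Δ) • 1 - A)⁻¹) * U).trace ≤
      psi U A u - psi U A (u + Δ) := by
  classical
  set B : Matrix (Fin n) (Fin n) ℝ := u • 1 - A with hBdef
  set C : Matrix (Fin n) (Fin n) ℝ := (u + Δ) • 1 - A with hCdef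
  have hCB : C = B + Δ • 1 := by
    rw [hBdef, hCdef, add_smul]; abel
  have hΔ1 : (Δ • (1 : Matrix (Fin n) (Fin n) ℝ)).PosDef := by
    rw [smul_one_eq_diagonal]
    exact Matrix.PosDef.diagonal fun _ => hΔ
  have hC : C.PosDef := hCB ▸ hpd.add hΔ1
  have hBu : IsUnit B.det := hpd.det_pos.ne'.isUnit
  have hCu : IsUnit C.det := hC.det_pos.ne'.isUnit
  -- B and C commute
  have hBCcomm : B * C = C * B := by
    rw [hCB, Matrix.mul_add, Matrix.add_mul, mul_smul_comm, smul_mul_assoc,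
      Matrix.mul_one, Matrix.one_mul]
  have hBCinv : B⁻¹ * C⁻¹ = C⁻¹ * B⁻¹ := by
    rw [← Matrix.mul_inv_rev, ← Matrix.mul_inv_rev, hBCcomm]
  -- resolvent identity
  have hkey : B⁻¹ - C⁻¹ = Δ • (C⁻¹ * B⁻¹) := by
    have h1 : C⁻¹ * (C - B) * B⁻¹ = B⁻¹ - C⁻¹ := by
      rw [Matrix.mul_sub, Matrix.sub_mul, Matrix.nonsing_inv_mul C hCu, Matrix.one_mul,
        Matrix.mul_assoc, Matrix.mul_nonsing_inv B hBu, Matrix.mul_one]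
    have h2 : C - B = Δ • 1 := by rw [hCB]; abel
    rw [← h1, h2]
    rw [Matrix.mul_smul, Matrix.smul_mul, Matrix.mul_one]
  -- symmetry of C⁻¹
  have hCsymm : (C⁻¹)ᵀ = C⁻¹ := by
    have h := hC.isHermitian.inv
    rwa [Matrix.IsHermitian, conjTranspose_eq_transpose_of_trivial] at h
  -- key matrix identity
  have hmat2 : B⁻¹ - C⁻¹ - Δ • (C⁻¹ * C⁻¹) = (Δ * Δ) • (C⁻¹ * (B⁻¹ * C⁻¹)) := by
    rw [hkey, ← smul_sub, ← Matrix.mul_sub, hkey, Matrix.mul_smul, smul_smul, ← hBCinv]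
  have hmat : Uᵀ * B⁻¹ * U - Uᵀ * C⁻¹ * U - Δ • (Uᵀ * (C⁻¹ * C⁻¹) * U)
      = (Δ * Δ) • (Uᵀ * (C⁻¹ * (B⁻¹ * C⁻¹)) * U) := by
    have expand : Uᵀ * (B⁻¹ - C⁻¹ - Δ • (C⁻¹ * C⁻¹)) * U
        = Uᵀ * B⁻¹ * U - Uᵀ * C⁻¹ * U - Δ • (Uᵀ * (C⁻¹ * C⁻¹) * U) := by
      rw [Matrix.mul_sub, Matrix.mul_sub, Matrix.sub_mul, Matrix.sub_mul,
        Matrix.mul_smul, Matrix.smul_mul]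
    rw [← expand, hmat2, Matrix.mul_smul, Matrix.smul_mul]
  -- positivity
  have hposM : ((C⁻¹ * U)ᴴ * B⁻¹ * (C⁻¹ * U)).PosSemidef :=
    hpd.inv.posSemidef.conjTranspose_mul_mul_same _
  have hrw : (C⁻¹ * U)ᴴ * B⁻¹ * (C⁻¹ * U) = Uᵀ * (C⁻¹ * (B⁻¹ * C⁻¹)) * U := by
    rw [conjTranspose_mul, conjTranspose_eq_transpose_of_trivial,
      conjTranspose_eq_transpose_of_trivial, hCsymm]
    simp only [Matrix.mul_assoc]
  have hpos : 0 ≤ (Uᵀ * (C⁻¹ * (B⁻¹ * C⁻¹)) * U).trace := by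
    rw [← hrw]; exact trace_nonneg_of_posSemidef hposM
  have htr := congrArg Matrix.trace hmat
  rw [trace_sub, trace_sub, trace_smul, trace_smul, smul_eq_mul, smul_eq_mul] at htr
  have hψ : psi U A u = (Uᵀ * B⁻¹ * U).trace := by rw [psi, ← hBdef]
  have hψ' : psi U A (u + Δ) = (Uᵀ * C⁻¹ * U).trace := by rw [psi, ← hCdef]
  rw [hψ, hψ']
  nlinarith [htr, hpos, mul_nonneg (mul_nonneg hΔ.le hΔ.le) hpos]
end

section
/- Let U be a nonzero n×m real matrix, A an n×n real symmetric matrix with A ≺ u·Id, Δ > 0 and u' = u + Δ, and assume ψ(A,u) − ψ(A,u') > 0. Define for v ∈ ℝⁿ: F(v) = (vᵗ(u'·Id − A)⁻²v/(ψ(A,u) − ψ(A,u')))·‖U‖² + vᵗ(u'·Id − A)⁻¹v. Then Σ_{j≤m} F(Ue_j) ≤ ‖U‖²/Δ + ψ(A,u). -/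
open Matrix
open scoped BigOperators

private theorem sum_dot_eq_trace {n m : ℕ} (U : Matrix (Fin n) (Fin m) ℝ)
    (M : Matrix (Fin n) (Fin n) ℝ) :
    ∑ j, (fun i => U i j) ⬝ᵥ (M *ᵥ (fun i => U i j)) = (Uᵀ * M * U).trace := by
  simp only [Matrix.trace, Matrix.diag_apply, Matrix.mul_apply, dotProduct, Matrix.mulVec,
    Matrix.transpose_apply, Finset.mul_sum, Finset.sum_mul]
  refine Finset.sum_congr rfl fun j _ => ?_
  rw [Finset.sum_comm]
  exact Finset.sum_congr rfl fun i _ => Finset.sum_congr rfl fun k _ => by ring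

private theorem trace_conj_nonneg {n m : ℕ} (U : Matrix (Fin n) (Fin m) ℝ)
    {M : Matrix (Fin n) (Fin n) ℝ} (hM : M.PosSemidef) :
    0 ≤ (Uᵀ * M * U).trace := by
  rw [← sum_dot_eq_trace]
  refine Finset.sum_nonneg fun j _ => ?_
  have := hM.dotProduct_mulVec_nonneg (fun i => U i j)
  simpa using this

/-- **Lemma (average of `F` over the columns).** If `A ≺ u·Id`, `u' = u + Δ` with
`Δ > 0`, and `ψ(A,u) − ψ(A,u') > 0`, then
`∑_j F(Ue_j) ≤ ‖U‖²/Δ + ψ(A,u)` where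
`F(v) = (vᵗ(u'Id−A)⁻²v/(ψ(A,u)−ψ(A,u')))‖U‖² + vᵗ(u'Id−A)⁻¹v`. -/
theorem sum_F_upper_bound {n m : ℕ} (U : Matrix (Fin n) (Fin m) ℝ) (hU : U ≠ 0)
    (A : Matrix (Fin n) (Fin n) ℝ) (hA : A.IsHermitian)
    (u Δ : ℝ) (hpd : (u • 1 - A).PosDef) (hΔ : 0 < Δ)
    (hΨ : 0 < psi U A u - psi U A (u + Δ)) :
    ∑ j, ((fun i => U i j) ⬝ᵥ ((((u + Δ) • 1 - A)⁻¹ * ((u + Δ) • 1 - A)⁻¹) *ᵥ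
            (fun i => U i j)) / (psi U A u - psi U A (u + Δ)) * opNorm U ^ 2
        + (fun i => U i j) ⬝ᵥ (((u + Δ) • 1 - A)⁻¹ *ᵥ (fun i => U i j))) ≤
      opNorm U ^ 2 / Δ + psi U A u := by
  set B : Matrix (Fin n) (Fin n) ℝ := u • 1 - A with hB
  set B' : Matrix (Fin n) (Fin n) ℝ := (u + Δ) • 1 - A with hB'
  have hBB' : B' = B + Δ • 1 := by
    rw [hB, hB']; module
  -- B' is positive definite
  have hΔ1 : (Δ • (1 : Matrix (Fin n) (Fin n) ℝ)).PosDef := by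
    rw [smul_one_eq_diagonal]
    exact Matrix.PosDef.diagonal fun _ => hΔ
  have hpd' : B'.PosDef := by rw [hBB']; exact hpd.add hΔ1
  -- inverse facts
  have hBu : IsUnit B.det := hpd.det_pos.ne'.isUnit
  have hB'u : IsUnit B'.det := hpd'.det_pos.ne'.isUnit
  have hBinv : B⁻¹ * B = 1 := Matrix.nonsing_inv_mul B hBu
  have hBinv' : B * B⁻¹ = 1 := Matrix.mul_nonsing_inv B hBu
  have hB'inv : B'⁻¹ * B' = 1 := Matrix.nonsing_inv_mul B' hB'u
  have hB'inv' : B' * B'⁻¹ = 1 := Matrix.mul_nonsing_inv B' hB'u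
  -- commutation
  have hcomm : B * B' = B' * B := by rw [hBB']; noncomm_ring
  have hcommInv : B⁻¹ * B'⁻¹ = B'⁻¹ * B⁻¹ := by
    rw [← Matrix.mul_inv_rev, ← Matrix.mul_inv_rev, hcomm]
  -- key resolvent identity
  have hkey : B⁻¹ - B'⁻¹ = Δ • (B⁻¹ * B'⁻¹) := by
    have : B⁻¹ * (B' - B) * B'⁻¹ = B⁻¹ - B'⁻¹ := by
      rw [Matrix.mul_sub, Matrix.sub_mul, Matrix.mul_assoc B⁻¹ B' B'⁻¹, hB'inv',
        Matrix.mul_one, hBinv, Matrix.one_mul]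
    rw [← this, hBB']
    simp [Matrix.mul_smul, Matrix.smul_mul]
  -- symmetry of B'⁻¹
  have hB'sym : B'⁻¹ᵀ = B'⁻¹ := by
    have := hpd'.1.inv
    simpa [Matrix.IsHermitian, Matrix.conjTranspose_eq_transpose_of_trivial] using this
  -- gap as a trace
  have hgap : psi U A u - psi U A (u + Δ) = Δ * (Uᵀ * (B⁻¹ * B'⁻¹) * U).trace := by
    rw [psi, psi, ← hB, ← hB']
    rw [← Matrix.trace_sub]
    rw [show Uᵀ * B⁻¹ * U - Uᵀ * B'⁻¹ * U = Uᵀ * (B⁻¹ - B'⁻¹) * U by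
      rw [Matrix.mul_sub, Matrix.sub_mul]]
    rw [hkey]
    rw [Matrix.mul_smul, Matrix.smul_mul, Matrix.trace_smul]
    simp
  -- first PSD bound : Δ * Tr(Uᵀ B'⁻² U) ≤ gap
  have hS1 : Δ * (Uᵀ * (B'⁻¹ * B'⁻¹) * U).trace ≤ psi U A u - psi U A (u + Δ) := by
    rw [hgap]
    have hdiff : (Uᵀ * (B⁻¹ * B'⁻¹) * U).trace - (Uᵀ * (B'⁻¹ * B'⁻¹) * U).trace
        = Δ * ((B'⁻¹ * U)ᵀ * B⁻¹ * (B'⁻¹ * U)).trace := by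
      rw [← Matrix.trace_sub]
      rw [show Uᵀ * (B⁻¹ * B'⁻¹) * U - Uᵀ * (B'⁻¹ * B'⁻¹) * U
          = Uᵀ * ((B⁻¹ - B'⁻¹) * B'⁻¹) * U by
        rw [Matrix.sub_mul, Matrix.mul_sub, Matrix.sub_mul]]
      have hmat : Uᵀ * ((B⁻¹ - B'⁻¹) * B'⁻¹) * U
          = Δ • ((B'⁻¹ * U)ᵀ * B⁻¹ * (B'⁻¹ * U)) := by
        rw [hkey, Matrix.smul_mul, Matrix.mul_smul, Matrix.smul_mul]
        congr 1
        rw [Matrix.transpose_mul, hB'sym,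
          show B⁻¹ * B'⁻¹ * B'⁻¹ = B'⁻¹ * B⁻¹ * B'⁻¹ by rw [hcommInv]]
        simp only [Matrix.mul_assoc]
      rw [hmat, Matrix.trace_smul, smul_eq_mul]
    have hpos : 0 ≤ ((B'⁻¹ * U)ᵀ * B⁻¹ * (B'⁻¹ * U)).trace :=
      trace_conj_nonneg (B'⁻¹ * U) hpd.posSemidef.inv
    have h3 : (Uᵀ * (B'⁻¹ * B'⁻¹) * U).trace ≤ (Uᵀ * (B⁻¹ * B'⁻¹) * U).trace := by
      nlinarith [hdiff, mul_nonneg hΔ.le hpos]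
    exact mul_le_mul_of_nonneg_left h3 hΔ.le
  -- second PSD fact : ψ(u') ≤ ψ(u), trivially from hΨ
  -- Now rewrite the sum
  have hsum : ∑ j, ((fun i => U i j) ⬝ᵥ ((B'⁻¹ * B'⁻¹) *ᵥ (fun i => U i j))
          / (psi U A u - psi U A (u + Δ)) * opNorm U ^ 2
        + (fun i => U i j) ⬝ᵥ (B'⁻¹ *ᵥ (fun i => U i j)))
      = (Uᵀ * (B'⁻¹ * B'⁻¹) * U).trace / (psi U A u - psi U A (u + Δ)) * opNorm U ^ 2
        + psi U A (u + Δ) := by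
    rw [Finset.sum_add_distrib]
    congr 1
    · simp only [div_mul_eq_mul_div, ← Finset.sum_div, ← Finset.sum_mul]
      rw [sum_dot_eq_trace]
    · rw [sum_dot_eq_trace, psi, hB']
  rw [hsum]
  have hN : (0:ℝ) ≤ opNorm U ^ 2 := sq_nonneg _
  have h1 : (Uᵀ * (B'⁻¹ * B'⁻¹) * U).trace / (psi U A u - psi U A (u + Δ)) * opNorm U ^ 2
      ≤ opNorm U ^ 2 / Δ := by
    have hdiv : (Uᵀ * (B'⁻¹ * B'⁻¹) * U).trace / (psi U A u - psi U A (u + Δ)) ≤ 1 / Δ := by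
      rw [div_le_div_iff₀ hΨ hΔ]
      nlinarith [hS1]
    calc _ ≤ 1 / Δ * opNorm U ^ 2 := mul_le_mul_of_nonneg_right hdiv hN
    _ = opNorm U ^ 2 / Δ := by ring
  have h2 : psi U A (u + Δ) ≤ psi U A u := by linarith
  linarith
end

section
/- Let T be a nonzero n×n complex Hermitian matrix with zero diagonal (⟨Te_i, e_i⟩ = 0 for all i). Then A = T + ‖T‖·Id is positive semidefinite, and its positive semidefinite square root U = A^{1/2} satisfies ‖Ue_i‖₂² = ‖T‖ for every i ∈ {1,…,n}, and ‖U‖² ≤ 2‖T‖. -/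
open Matrix
open scoped BigOperators ComplexOrder

/-- The operator norm of a complex matrix viewed as a map `ℓ₂ → ℓ₂`. -/
noncomputable def opNormC {k l : Type*} [Fintype k] [Fintype l] [DecidableEq l]
    (M : Matrix k l ℂ) : ℝ :=
  ‖LinearMap.toContinuousLinearMap (Matrix.toEuclideanLin M)‖

/-- The positive semidefinite square root of a positive semidefinite matrix
(the definition `Matrix.PosSemidef.sqrt` of the older Mathlib, since removed). -/
noncomputable def Matrix.PosSemidef.sqrt {n 𝕜 : Type*} [Fintype n] [RCLike 𝕜] [DecidableEq n]
    {A : Matrix n n 𝕜} (hA : A.PosSemidef) : Matrix n n 𝕜 :=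
  hA.1.eigenvectorUnitary.1 * diagonal ((↑) ∘ (√·) ∘ hA.1.eigenvalues) *
    (star hA.1.eigenvectorUnitary : Matrix n n 𝕜)

lemma Matrix.PosSemidef.sqrt_conjTranspose_self {n 𝕜 : Type*} [Fintype n] [RCLike 𝕜]
    [DecidableEq n] {A : Matrix n n 𝕜} (hA : A.PosSemidef) : (hA.sqrt)ᴴ = hA.sqrt := by
  unfold Matrix.PosSemidef.sqrt
  rw [Matrix.conjTranspose_mul, Matrix.conjTranspose_mul, Matrix.diagonal_conjTranspose]
  have hd : star ((↑) ∘ (√·) ∘ hA.1.eigenvalues : n → 𝕜) = (↑) ∘ (√·) ∘ hA.1.eigenvalues := by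
    funext i; simp
  rw [hd, ← Matrix.star_eq_conjTranspose, ← Matrix.star_eq_conjTranspose, star_star,
    Matrix.mul_assoc]

lemma Matrix.PosSemidef.sqrt_mul_self' {n 𝕜 : Type*} [Fintype n] [RCLike 𝕜]
    [DecidableEq n] {A : Matrix n n 𝕜} (hA : A.PosSemidef) : hA.sqrt * hA.sqrt = A := by
  unfold Matrix.PosSemidef.sqrt
  have hu : (star hA.1.eigenvectorUnitary : Matrix n n 𝕜) * hA.1.eigenvectorUnitary.1 = 1 :=
    Unitary.coe_star_mul_self _
  have hdd : diagonal ((↑) ∘ (√·) ∘ hA.1.eigenvalues : n → 𝕜) *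
      diagonal ((↑) ∘ (√·) ∘ hA.1.eigenvalues) = diagonal (RCLike.ofReal ∘ hA.1.eigenvalues) := by
    rw [Matrix.diagonal_mul_diagonal]
    congr 1; funext i
    simp only [Function.comp_apply]
    rw [← RCLike.ofReal_mul, Real.mul_self_sqrt (hA.eigenvalues_nonneg i)]
  conv_rhs => rw [hA.1.spectral_theorem, Unitary.conjStarAlgAut_apply]
  calc _ = hA.1.eigenvectorUnitary.1 * diagonal ((↑) ∘ (√·) ∘ hA.1.eigenvalues : n → 𝕜) *
        ((star hA.1.eigenvectorUnitary : Matrix n n 𝕜) * hA.1.eigenvectorUnitary.1) *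
        diagonal ((↑) ∘ (√·) ∘ hA.1.eigenvalues) *
        (star hA.1.eigenvectorUnitary : Matrix n n 𝕜) := by simp only [Matrix.mul_assoc]
    _ = _ := by rw [hu, Matrix.mul_one, Matrix.mul_assoc _ (diagonal _) (diagonal _), hdd]

open scoped Matrix.Norms.L2Operator

lemma opNormC_eq_norm {k l : Type*} [Fintype k] [Fintype l] [DecidableEq l]
    (M : Matrix k l ℂ) : opNormC M = ‖M‖ := rfl

lemma opNormC_eq_clm {n : ℕ} (M : Matrix (Fin n) (Fin n) ℂ) :
    opNormC M = ‖Matrix.toEuclideanCLM (n := Fin n) (𝕜 := ℂ) M‖ := rfl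

/-- Let `T` be a nonzero Hermitian matrix with zero diagonal. Then `A = T + ‖T‖·Id` is
positive semidefinite, its PSD square root `U = A^{1/2}` has all columns of squared
Euclidean norm `‖T‖`, and `‖U‖² ≤ 2‖T‖`. -/
theorem shifted_hermitian_sqrt {n : ℕ} (T : Matrix (Fin n) (Fin n) ℂ)
    (hT : T.IsHermitian) (hT0 : T ≠ 0) (hdiag : ∀ i, T i i = 0) :
    ∃ hA : (T + (opNormC T : ℂ) • (1 : Matrix (Fin n) (Fin n) ℂ)).PosSemidef,
      (∀ i, ∑ k, ‖hA.sqrt k i‖ ^ 2 = opNormC T) ∧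
      opNormC hA.sqrt ^ 2 ≤ 2 * opNormC T := by
  set c : ℝ := opNormC T with hc
  have hc0 : 0 ≤ c := by rw [hc, opNormC_eq_norm]; exact norm_nonneg T
  -- Hermitian-ness of A
  have hAh : (T + (c : ℂ) • (1 : Matrix (Fin n) (Fin n) ℂ)).IsHermitian := by
    refine hT.add ?_
    simp [Matrix.IsHermitian, Matrix.conjTranspose_smul, Complex.conj_ofReal]
  -- The CLM associated to T is self-adjoint
  have hsa : _root_.IsSelfAdjoint (Matrix.toEuclideanCLM (n := Fin n) (𝕜 := ℂ) T) := by
    have hsaT : _root_.IsSelfAdjoint T := hT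
    exact hsaT.map (Matrix.toEuclideanCLM (n := Fin n) (𝕜 := ℂ))
  have hsym := (ContinuousLinearMap.isSelfAdjoint_iff_isSymmetric).mp hsa
  -- quadratic form facts
  have key : ∀ x : Fin n → ℂ,
      dotProduct (star x) (T *ᵥ x)
        = inner ℂ ((WithLp.equiv 2 _).symm x)
            ((Matrix.toEuclideanCLM (n := Fin n) (𝕜 := ℂ) T) ((WithLp.equiv 2 _).symm x)) := by
    intro x
    rw [WithLp.equiv_symm_apply, Matrix.toEuclideanCLM_toLp, EuclideanSpace.inner_toLp_toLp,
      dotProduct_comm]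
  have hA : (T + (c : ℂ) • (1 : Matrix (Fin n) (Fin n) ℂ)).PosSemidef := by
    refine Matrix.PosSemidef.of_dotProduct_mulVec_nonneg hAh fun x => ?_
    set x' : EuclideanSpace ℂ (Fin n) := (WithLp.equiv 2 _).symm x with hx'
    have hq : dotProduct (star x) ((T + (c : ℂ) • 1) *ᵥ x)
        = inner ℂ x' ((Matrix.toEuclideanCLM (n := Fin n) (𝕜 := ℂ) T) x')
          + (c : ℂ) * ((‖x'‖ : ℂ) ^ 2) := by
      rw [Matrix.add_mulVec, dotProduct_add, key x]
      congr 1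
      rw [Matrix.smul_mulVec, Matrix.one_mulVec, dotProduct_smul]
      have : dotProduct (star x) x = inner ℂ x' x' := by
        rw [hx', WithLp.equiv_symm_apply, EuclideanSpace.inner_toLp_toLp, dotProduct_comm]
      rw [smul_eq_mul, this, inner_self_eq_norm_sq_to_K]
      norm_num
    set z : ℂ := inner ℂ x' ((Matrix.toEuclideanCLM (n := Fin n) (𝕜 := ℂ) T) x') with hz
    have hzre : (starRingEnd ℂ) z = z := by
      rw [hz, inner_conj_symm]
      exact hsym x' x'
    have hzim : z.im = 0 := by
      have h2 := congrArg Complex.im hzre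
      rw [Complex.conj_im] at h2
      linarith
    have hznorm : ‖z‖ ≤ c * ‖x'‖ ^ 2 := by
      calc ‖z‖ ≤ ‖x'‖ * ‖(Matrix.toEuclideanCLM (n := Fin n) (𝕜 := ℂ) T) x'‖ :=
            norm_inner_le_norm _ _
        _ ≤ ‖x'‖ * (c * ‖x'‖) := by
            refine mul_le_mul_of_nonneg_left ?_ (norm_nonneg _)
            rw [hc, opNormC_eq_clm]
            exact ContinuousLinearMap.le_opNorm _ _
        _ = c * ‖x'‖ ^ 2 := by ring
    have hcast : (c : ℂ) * ((‖x'‖ : ℂ)) ^ 2 = ((c * ‖x'‖ ^ 2 : ℝ) : ℂ) := by push_cast; ring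
    rw [hq, hcast, Complex.nonneg_iff]
    have habs : |z.re| ≤ c * ‖x'‖ ^ 2 := by
      refine le_trans (Complex.abs_re_le_norm z) ?_
      exact hznorm
    constructor
    · rw [Complex.add_re, Complex.ofReal_re]
      have := neg_le_of_abs_le habs
      linarith
    · rw [Complex.add_im, Complex.ofReal_im, hzim]
      ring
  refine ⟨hA, ?_, ?_⟩
  · -- column norms
    intro i
    set U := hA.sqrt with hU
    have hUh : Uᴴ = U := hA.sqrt_conjTranspose_self
    have hAii : (T + (c : ℂ) • (1 : Matrix (Fin n) (Fin n) ℂ)) i i = (c : ℂ) := by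
      simp [hdiag i]
    have hsum : ((∑ k, ‖U k i‖ ^ 2 : ℝ) : ℂ) = (c : ℂ) := by
      push_cast
      calc (∑ k, (‖U k i‖ : ℂ) ^ 2)
          = ∑ k, (starRingEnd ℂ) (U k i) * U k i := by
            refine Finset.sum_congr rfl fun k _ => ?_
            rw [RCLike.conj_mul]; norm_cast
        _ = (Uᴴ * U) i i := by simp [Matrix.mul_apply, Matrix.conjTranspose_apply]
        _ = (c : ℂ) := by rw [hUh, hA.sqrt_mul_self', hAii]
    exact_mod_cast hsum
  · -- operator norm bound
    have h1 : ‖(1 : Matrix (Fin n) (Fin n) ℂ)‖ ≤ 1 := by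
      rw [Matrix.cstar_norm_def, _root_.map_one]
      exact ContinuousLinearMap.norm_id_le
    have hAn : ‖T + (c : ℂ) • (1 : Matrix (Fin n) (Fin n) ℂ)‖ ≤ 2 * c := by
      calc ‖T + (c : ℂ) • (1 : Matrix (Fin n) (Fin n) ℂ)‖
          ≤ ‖T‖ + ‖(c : ℂ) • (1 : Matrix (Fin n) (Fin n) ℂ)‖ := norm_add_le _ _
        _ ≤ c + c * 1 := by
            refine add_le_add (le_of_eq (opNormC_eq_norm T).symm) ?_
            rw [norm_smul]
            have : ‖(c : ℂ)‖ = c := by simp [Complex.norm_real, abs_of_nonneg hc0]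
            rw [this]
            exact mul_le_mul_of_nonneg_left h1 hc0
        _ = 2 * c := by ring
    have hsq : opNormC hA.sqrt ^ 2 = ‖T + (c : ℂ) • (1 : Matrix (Fin n) (Fin n) ℂ)‖ := by
      rw [opNormC_eq_norm, sq, ← Matrix.l2_opNorm_conjTranspose_mul_self,
        hA.sqrt_conjTranspose_self, hA.sqrt_mul_self']
    rw [hsq]
    exact hAn
end
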